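/- Let Y be a locally finite directed graph. The map sending a harmonic form f ∈ H(Y,ℂ) to the linear form on H_c^1(Y,ℂ) given by ω + dC_c^0(Y,ℂ) ↦ ⟨f, ω⟩ is well defined and is a linear isomorphism from H(Y,ℂ) onto the algebraic dual of H_c^1(Y,ℂ). -/

import Mathlib

open Function

/-- A directed graph: vertices, edges, head and tail maps. -/
structure DiGraph where
  V : Type
  E : Type
  head : E → V
  tail : E → V

namespace DiGraph

/-- A directed graph is locally finite if every vertex belongs to finitely many edges. -/
def LocallyFinite (Y : DiGraph) : Prop :=
  ∀ s : Y.V, {a : Y.E | Y.head a = s ∨ Y.tail a = s}.Finite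

/-- The coboundary `df` of a `0`-cochain `f`: `df(a) = f(a⁺) - f(a⁻)`. -/
def cobound (Y : DiGraph) (f : Y.V → ℂ) : Y.E → ℂ :=
  fun a => f (Y.head a) - f (Y.tail a)

/-- The map `d* : C¹(Y,ℂ) → C⁰(Y,ℂ)`,
`d*f(s) = Σ_{a : a⁺ = s} f(a) - Σ_{a : a⁻ = s} f(a)`. -/
noncomputable def dstar (Y : DiGraph) (f : Y.E → ℂ) : Y.V → ℂ :=
  fun s => (∑ᶠ a ∈ {a : Y.E | Y.head a = s}, f a) - ∑ᶠ a ∈ {a : Y.E | Y.tail a = s}, f a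

/-- The pairing `⟨f, g⟩ = Σ_x f(x) g(x)`. -/
noncomputable def pairing {α : Type} (f g : α → ℂ) : ℂ := ∑ᶠ x, f x * g x

/-- Finitely supported complex valued functions on `α`, as a subspace of all functions. -/
noncomputable def CcSub (α : Type) : Submodule ℂ (α → ℂ) where
  carrier := {f | (support f).Finite}
  add_mem' := fun hf hg => Set.Finite.subset (hf.union hg) (support_add _ _)
  zero_mem' := by simp
  smul_mem' := fun c f hf => Set.Finite.subset hf (support_const_smul_subset c f)

/-- The coboundary, as a linear map on finitely supported cochains (this uses
local finiteness of the graph). -/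
noncomputable def dcc (Y : DiGraph) (hY : Y.LocallyFinite) :
    CcSub Y.V →ₗ[ℂ] CcSub Y.E where
  toFun f := ⟨Y.cobound f.1, by
    have hsub : support (Y.cobound f.1) ⊆
        ⋃ s ∈ support f.1, {a : Y.E | Y.head a = s ∨ Y.tail a = s} := by
      intro a ha
      by_cases h : f.1 (Y.head a) = 0
      · have h' : f.1 (Y.tail a) ≠ 0 := by
          intro h''
          exact ha (by simp [cobound, h, h''])
        exact Set.mem_biUnion h' (Or.inr rfl)
      · exact Set.mem_biUnion h (Or.inl rfl)
    exact Set.Finite.subset (Set.Finite.biUnion f.2 (fun s _ => hY s)) hsub⟩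
  map_add' f g := by
    apply Subtype.ext
    funext a
    simp [cobound]
    ring
  map_smul' c f := by
    apply Subtype.ext
    funext a
    simp [cobound]
    ring

/-- The first cohomology space with compact support of the graph, defined as
finitely supported 1-cochains modulo coboundaries of finitely supported 0-cochains. -/
noncomputable abbrev Hc1 (Y : DiGraph) (hY : Y.LocallyFinite) :=
  ↥(CcSub Y.E) ⧸ LinearMap.range (Y.dcc hY)

/-- The space of harmonic forms `ker d*`. -/
noncomputable def HarmSub (Y : DiGraph) (hY : Y.LocallyFinite) : Submodule ℂ (Y.E → ℂ) where
  carrier := {f | ∀ s, Y.dstar f s = 0}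
  zero_mem' := by
    intro s
    simp [dstar]
  add_mem' := by
    intro f g hf hg s
    have h1 : {a : Y.E | Y.head a = s}.Finite := (hY s).subset (fun a ha => Or.inl ha)
    have h2 : {a : Y.E | Y.tail a = s}.Finite := (hY s).subset (fun a ha => Or.inr ha)
    have hf' := hf s
    have hg' := hg s
    simp only [dstar, Pi.add_apply] at hf' hg' ⊢
    rw [finsum_mem_add_distrib h1, finsum_mem_add_distrib h2]
    linear_combination hf' + hg'
  smul_mem' := by
    intro c f hf s
    have h1 : {a : Y.E | Y.head a = s}.Finite := (hY s).subset (fun a ha => Or.inl ha)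
    have h2 : {a : Y.E | Y.tail a = s}.Finite := (hY s).subset (fun a ha => Or.inr ha)
    have hf' := hf s
    simp only [dstar, Pi.smul_apply, smul_eq_mul] at hf' ⊢
    rw [finsum_mem_eq_finite_toFinset_sum _ h1, finsum_mem_eq_finite_toFinset_sum _ h2]
      at hf' ⊢
    rw [← Finset.mul_sum, ← Finset.mul_sum]
    linear_combination c * hf'

section Aux

open scoped Classical

/-- Delta function at a point. -/
noncomputable def delta {α : Type} (a : α) : α → ℂ := fun x => if x = a then 1 else 0

lemma delta_support {α : Type} (a : α) : support (delta a) ⊆ {a} := by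
  intro x hx
  by_contra h
  exact hx (if_neg (by simpa using h))

lemma delta_mem {α : Type} (a : α) : delta a ∈ CcSub α :=
  (Set.finite_singleton a).subset (delta_support a)

/-- Delta function at a point, as an element of `CcSub`. -/
noncomputable def deltaCc {α : Type} (a : α) : CcSub α := ⟨delta a, delta_mem a⟩

lemma pairing_eq_sum {α : Type} (f ω : α → ℂ) (s : Finset α) (h : support ω ⊆ ↑s) :
    pairing f ω = ∑ a ∈ s, f a * ω a := by
  refine finsum_eq_finset_sum_of_support_subset _ (fun x hx => h ?_)
  intro hx0
  exact hx (by simp [hx0])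

lemma pairing_delta {α : Type} (f : α → ℂ) (a : α) : pairing f (delta a) = f a := by
  have := finsum_eq_single (fun x => f x * delta a x) a
    (fun x hx => by simp [delta, hx])
  simpa [pairing, delta] using this

lemma fiber_head_finite {Y : DiGraph} (hY : Y.LocallyFinite) (s : Y.V) :
    {a : Y.E | Y.head a = s}.Finite := (hY s).subset (fun a ha => Or.inl ha)

lemma fiber_tail_finite {Y : DiGraph} (hY : Y.LocallyFinite) (s : Y.V) :
    {a : Y.E | Y.tail a = s}.Finite := (hY s).subset (fun a ha => Or.inr ha)

/-- Summation by parts: a harmonic form pairs to zero with any coboundary. -/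
lemma pairing_cobound_eq_zero {Y : DiGraph} (hY : Y.LocallyFinite)
    (f : Y.E → ℂ) (hf : f ∈ Y.HarmSub hY)
    (g : Y.V → ℂ) (hg : (support g).Finite) :
    pairing f (Y.cobound g) = 0 := by
  classical
  set G : Finset Y.V := hg.toFinset with hG
  have hS : (⋃ s ∈ (↑G : Set Y.V), {a : Y.E | Y.head a = s ∨ Y.tail a = s}).Finite :=
    Set.Finite.biUnion G.finite_toSet (fun s _ => hY s)
  set T : Finset Y.E := hS.toFinset with hT
  have hsupp : support (Y.cobound g) ⊆ ↑T := by
    intro a ha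
    simp only [hT, Set.Finite.coe_toFinset, Set.mem_iUnion]
    by_cases h : g (Y.head a) = 0
    · have h' : g (Y.tail a) ≠ 0 := fun h'' => ha (by simp [cobound, h, h''])
      exact ⟨Y.tail a, by simp [hG, h'], Or.inr rfl⟩
    · exact ⟨Y.head a, by simp [hG, h], Or.inl rfl⟩
  rw [pairing_eq_sum f (Y.cobound g) T hsupp]
  have key : ∀ (v : Y.E → Y.V), (∀ a : Y.E, ∀ s ∈ G, v a = s → a ∈ T) →
      ∑ a ∈ T, f a * g (v a) =
        ∑ s ∈ G, (∑ᶠ a ∈ {a : Y.E | v a = s}, f a) * g s := by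
    intro v hv
    have step1 : ∀ a ∈ T, f a * g (v a) =
        ∑ s ∈ G, (if v a = s then f a * g s else 0) := by
      intro a _
      by_cases hva : v a ∈ G
      · rw [Finset.sum_ite_eq G (v a) (fun s => f a * g s)]
        simp [hva]
      · have : g (v a) = 0 := by
          by_contra h
          exact hva (by simp [hG, h])
        rw [this, mul_zero]
        refine (Finset.sum_eq_zero ?_).symm
        intro s hs
        rw [if_neg]
        intro h
        exact hva (h ▸ hs)
    rw [Finset.sum_congr rfl step1, Finset.sum_comm]
    refine Finset.sum_congr rfl (fun s hs => ?_)
    have hfib : {a : Y.E | v a = s}.Finite := by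
      refine Set.Finite.subset T.finite_toSet (fun a ha => hv a s hs ha)
    rw [finsum_mem_eq_finite_toFinset_sum _ hfib]
    rw [Finset.sum_ite]
    simp only [Finset.sum_const_zero, add_zero]
    rw [← Finset.sum_mul]
    congr 1
    apply Finset.sum_congr ?_ (fun _ _ => rfl)
    ext a
    simp only [Finset.mem_filter, Set.Finite.mem_toFinset, Set.mem_setOf_eq]
    constructor
    · rintro ⟨_, h⟩; exact h
    · intro h; exact ⟨hv a s hs h, h⟩
  have hhead := key Y.head (fun a s hs h => by
    simp only [hT, Set.Finite.mem_toFinset, Set.mem_iUnion]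
    exact ⟨s, hs, Or.inl h⟩)
  have htail := key Y.tail (fun a s hs h => by
    simp only [hT, Set.Finite.mem_toFinset, Set.mem_iUnion]
    exact ⟨s, hs, Or.inr h⟩)
  have expand : ∑ a ∈ T, f a * Y.cobound g a =
      ∑ a ∈ T, f a * g (Y.head a) - ∑ a ∈ T, f a * g (Y.tail a) := by
    rw [← Finset.sum_sub_distrib]
    refine Finset.sum_congr rfl (fun a _ => ?_)
    simp [cobound]; ring
  rw [expand, hhead, htail, ← Finset.sum_sub_distrib]
  refine Finset.sum_eq_zero (fun s _ => ?_)
  have := hf s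
  simp only [dstar] at this
  rw [← sub_mul]
  rw [this, zero_mul]

/-- The pairing with a fixed 1-cochain, as a linear form on `CcSub`. -/
noncomputable def Lform {Y : DiGraph} (f : Y.E → ℂ) : CcSub Y.E →ₗ[ℂ] ℂ where
  toFun ω := pairing f ω.1
  map_add' ω₁ ω₂ := by
    have h12 : (support (ω₁.1 + ω₂.1)).Finite := (ω₁.2.union ω₂.2).subset (support_add _ _)
    set s : Finset Y.E := (ω₁.2.union ω₂.2).toFinset with hs
    have h1 : support ω₁.1 ⊆ ↑s := by intro x hx; simp [hs, hx]
    have h2 : support ω₂.1 ⊆ ↑s := by intro x hx; simp [hs, hx]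
    have h3 : support (ω₁.1 + ω₂.1) ⊆ ↑s :=
      (support_add _ _).trans (by intro x hx; simp [hs]; exact hx)
    show pairing f (ω₁.1 + ω₂.1) = pairing f ω₁.1 + pairing f ω₂.1
    rw [pairing_eq_sum f _ s h3, pairing_eq_sum f _ s h1, pairing_eq_sum f _ s h2,
      ← Finset.sum_add_distrib]
    refine Finset.sum_congr rfl (fun a _ => ?_)
    simp; ring
  map_smul' c ω := by
    have h : support (c • ω.1) ⊆ ↑(ω.2.toFinset) :=
      (support_const_smul_subset c ω.1).trans (by intro x hx; exact (Set.Finite.mem_toFinset (s := support ω.1) ω.2).mpr hx)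
    have h1 : support ω.1 ⊆ ↑(ω.2.toFinset) := by intro x hx; exact (Set.Finite.mem_toFinset (s := support ω.1) ω.2).mpr hx
    show pairing f (c • ω.1) = c * pairing f ω.1
    rw [pairing_eq_sum f _ _ h, pairing_eq_sum f _ _ h1, Finset.mul_sum]
    refine Finset.sum_congr rfl (fun a _ => ?_)
    simp; ring

lemma Lform_add {Y : DiGraph} (f g : Y.E → ℂ) (ω : CcSub Y.E) :
    Lform (f + g) ω = Lform f ω + Lform g ω := by
  simp only [Lform, LinearMap.coe_mk, AddHom.coe_mk]
  rw [pairing_eq_sum _ ω.1 ω.2.toFinset (by intro x hx; exact (Set.Finite.mem_toFinset (s := support ω.1) ω.2).mpr hx),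
    pairing_eq_sum f ω.1 ω.2.toFinset (by intro x hx; exact (Set.Finite.mem_toFinset (s := support ω.1) ω.2).mpr hx),
    pairing_eq_sum g ω.1 ω.2.toFinset (by intro x hx; exact (Set.Finite.mem_toFinset (s := support ω.1) ω.2).mpr hx),
    ← Finset.sum_add_distrib]
  refine Finset.sum_congr rfl (fun a _ => ?_)
  simp; ring

lemma Lform_smul {Y : DiGraph} (c : ℂ) (f : Y.E → ℂ) (ω : CcSub Y.E) :
    Lform (c • f) ω = c * Lform f ω := by
  simp only [Lform, LinearMap.coe_mk, AddHom.coe_mk]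
  rw [pairing_eq_sum _ ω.1 ω.2.toFinset (by intro x hx; exact (Set.Finite.mem_toFinset (s := support ω.1) ω.2).mpr hx),
    pairing_eq_sum f ω.1 ω.2.toFinset (by intro x hx; exact (Set.Finite.mem_toFinset (s := support ω.1) ω.2).mpr hx), Finset.mul_sum]
  refine Finset.sum_congr rfl (fun a _ => ?_)
  simp; ring

/-- The map from harmonic forms to the dual of `Hc1`. -/
noncomputable def Phi (Y : DiGraph) (hY : Y.LocallyFinite) :
    ↥(Y.HarmSub hY) →ₗ[ℂ] Module.Dual ℂ (Y.Hc1 hY) where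
  toFun f := Submodule.liftQ _ (Lform f.1) (by
    rintro _ ⟨g, rfl⟩
    show Lform f.1 (Y.dcc hY g) = 0
    exact pairing_cobound_eq_zero hY f.1 f.2 g.1 g.2)
  map_add' f g := by
    refine Submodule.linearMap_qext _ ?_
    ext ω
    simpa using Lform_add f.1 g.1 ω
  map_smul' c f := by
    refine Submodule.linearMap_qext _ ?_
    ext ω
    simpa using Lform_smul c f.1 ω

lemma Phi_apply {Y : DiGraph} (hY : Y.LocallyFinite) (f : ↥(Y.HarmSub hY))
    (ω : ↥(CcSub Y.E)) :
    Y.Phi hY f (Submodule.Quotient.mk ω) = pairing (f : Y.E → ℂ) (ω : Y.E → ℂ) := by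
  simp [Phi, Lform]

lemma Phi_bijective (Y : DiGraph) (hY : Y.LocallyFinite) :
    Function.Bijective (Y.Phi hY) := by
  classical
  constructor
  · intro f g hfg
    apply Subtype.ext
    funext a
    have h1 : Y.Phi hY f (Submodule.Quotient.mk (deltaCc a)) =
        Y.Phi hY g (Submodule.Quotient.mk (deltaCc a)) := by rw [hfg]
    rw [Phi_apply, Phi_apply] at h1
    simpa [deltaCc, pairing_delta] using h1
  · intro l
    set μ : CcSub Y.E →ₗ[ℂ] ℂ := l ∘ₗ (LinearMap.range (Y.dcc hY)).mkQ with hμ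
    set f : Y.E → ℂ := fun a => μ (deltaCc a) with hfdef
    have hf : f ∈ Y.HarmSub hY := by
      intro s
      have hH := fiber_head_finite hY s
      have hT := fiber_tail_finite hY s
      show (∑ᶠ a ∈ {a : Y.E | Y.head a = s}, f a)
        - (∑ᶠ a ∈ {a : Y.E | Y.tail a = s}, f a) = 0
      rw [finsum_mem_eq_finite_toFinset_sum _ hH, finsum_mem_eq_finite_toFinset_sum _ hT]
      have hsum : ∀ (t : Finset Y.E), ∑ a ∈ t, f a = μ (∑ a ∈ t, deltaCc a) := by
        intro t
        rw [map_sum]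
      rw [hsum, hsum, ← map_sub]
      have hkey : (∑ a ∈ hH.toFinset, deltaCc a) - (∑ a ∈ hT.toFinset, deltaCc a)
          = Y.dcc hY ⟨delta s, delta_mem s⟩ := by
        apply Subtype.ext
        funext b
        have hhb : ((∑ a ∈ hH.toFinset, deltaCc a : CcSub Y.E) : Y.E → ℂ) b
            = ∑ a ∈ hH.toFinset, delta a b := by
          simp [deltaCc]
        have htb : ((∑ a ∈ hT.toFinset, deltaCc a : CcSub Y.E) : Y.E → ℂ) b
            = ∑ a ∈ hT.toFinset, delta a b := by
          simp [deltaCc]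
        have e1 : ∑ a ∈ hH.toFinset, delta a b = if Y.head b = s then 1 else 0 := by
          rw [show (∑ a ∈ hH.toFinset, delta a b)
              = ∑ a ∈ hH.toFinset, if b = a then (1:ℂ) else 0 from rfl,
            Finset.sum_ite_eq hH.toFinset b (fun _ => (1:ℂ))]
          simp [Set.Finite.mem_toFinset]
        have e2 : ∑ a ∈ hT.toFinset, delta a b = if Y.tail b = s then 1 else 0 := by
          rw [show (∑ a ∈ hT.toFinset, delta a b)
              = ∑ a ∈ hT.toFinset, if b = a then (1:ℂ) else 0 from rfl,
            Finset.sum_ite_eq hT.toFinset b (fun _ => (1:ℂ))]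
          simp [Set.Finite.mem_toFinset]
        show ((∑ a ∈ hH.toFinset, deltaCc a : CcSub Y.E) : Y.E → ℂ) b
            - ((∑ a ∈ hT.toFinset, deltaCc a : CcSub Y.E) : Y.E → ℂ) b
            = Y.cobound (delta s) b
        rw [hhb, htb, e1, e2]
        simp [cobound, delta]
      rw [hkey, hμ]
      simp only [LinearMap.comp_apply, Submodule.mkQ_apply]
      have hmem : Y.dcc hY ⟨delta s, delta_mem s⟩ ∈ LinearMap.range (Y.dcc hY) :=
        LinearMap.mem_range_self _ _
      rw [(Submodule.Quotient.mk_eq_zero _).mpr hmem, map_zero]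
    refine ⟨⟨f, hf⟩, ?_⟩
    refine Submodule.linearMap_qext _ ?_
    ext ω
    simp only [LinearMap.comp_apply, Submodule.mkQ_apply]
    rw [Phi_apply]
    show pairing f ω.1 = l (Submodule.Quotient.mk ω)
    have hrepr : (∑ a ∈ ω.2.toFinset, ω.1 a • deltaCc a) = ω := by
      apply Subtype.ext
      funext x
      have hx : ((∑ a ∈ ω.2.toFinset, ω.1 a • deltaCc a : CcSub Y.E) : Y.E → ℂ) x
          = ∑ a ∈ ω.2.toFinset, ω.1 a * delta a x := by
        simp [deltaCc]
      rw [hx]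
      have : ∀ a ∈ ω.2.toFinset, ω.1 a * delta a x = if x = a then ω.1 a else 0 := by
        intro a _
        by_cases hxa : x = a <;> simp [delta, hxa]
      rw [Finset.sum_congr rfl this, Finset.sum_ite_eq ω.2.toFinset x ω.1]
      by_cases hxs : x ∈ support ω.1
      · have hm : x ∈ ω.2.toFinset := (Set.Finite.mem_toFinset (s := support ω.1) ω.2).mpr hxs
        simp [hm]
      · have : ω.1 x = 0 := by simpa [support] using hxs
        simp [Set.Finite.mem_toFinset, hxs, this]
    calc pairing f ω.1 = ∑ a ∈ ω.2.toFinset, f a * ω.1 a := by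
          exact pairing_eq_sum f ω.1 _ (by intro x hx; exact (Set.Finite.mem_toFinset (s := support ω.1) ω.2).mpr hx)
      _ = μ (∑ a ∈ ω.2.toFinset, ω.1 a • deltaCc a) := by
          rw [map_sum]
          refine Finset.sum_congr rfl (fun a _ => ?_)
          rw [map_smul]
          simp [hfdef, mul_comm]
      _ = l (Submodule.Quotient.mk ω) := by rw [hrepr, hμ]; rfl

end Aux

/-- For a locally finite directed graph `Y`, the map sending a
harmonic form `f ∈ H(Y,ℂ)` to the linear form `ω + dC_c⁰(Y,ℂ) ↦ ⟨f, ω⟩` on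
`H_c¹(Y,ℂ)` is well defined (this is the content of the existence of `Φ` with the
stated property) and is a linear isomorphism from `H(Y,ℂ)` onto the algebraic dual
of `H_c¹(Y,ℂ)`. -/
theorem harmonic_iso_dual_Hc1 (Y : DiGraph) (hY : Y.LocallyFinite) :
    ∃ Φ : ↥(Y.HarmSub hY) →ₗ[ℂ] Module.Dual ℂ (Y.Hc1 hY),
      (∀ (f : ↥(Y.HarmSub hY)) (ω : ↥(DiGraph.CcSub Y.E)),
        Φ f (Submodule.Quotient.mk ω) = DiGraph.pairing (f : Y.E → ℂ) (ω : Y.E → ℂ)) ∧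
      Function.Bijective Φ :=
  ⟨Y.Phi hY, fun f ω => Phi_apply hY f ω, Y.Phi_bijective hY⟩

end DiGraph
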